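/- Let λ > 0, σ ∈ ℝ, and τ ≥ 0, and set β = λ. Then (σ²/(2β)) ∫_0^1 F_{0,τ}(e^{2πit}) dt = (σ² e^{−λτ} / (2λ³)) · (1 + λτ). -/

import Mathlib

open Complex Finset intervalIntegral

noncomputable section

/-- F_{j,τ}(z) = (z^j/(λ−β−λz)) (e^{−βτ}(1−z)²/(λ−(λ+β)z) − 2β e^{λ(z−1)τ}/(λ(λ+β−λz))). -/
def Ffun (lam beta : ℝ) (j : ℕ) (τ : ℝ) (z : ℂ) : ℂ :=
  (z ^ j / (lam - beta - lam * z)) *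
    (Complex.exp (-(beta : ℂ) * τ) * (1 - z) ^ 2 / (lam - (lam + beta) * z) -
      2 * beta * Complex.exp ((lam : ℂ) * (z - 1) * τ) / (lam * (lam + beta - lam * z)))

/-! ### Auxiliary lemmas -/

lemma circle_param (g : ℂ → ℂ) :
    (∮ z in C((0:ℂ),1), g z) =
      (2 * Real.pi * I) * ∫ t in (0:ℝ)..1,
        Complex.exp (2 * Real.pi * I * t) * g (Complex.exp (2 * Real.pi * I * t)) := by
  rw [circleIntegral]
  have h1 : ∀ θ : ℝ, deriv (circleMap 0 1) θ • g (circleMap 0 1 θ)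
      = I * (Complex.exp (θ * I) * g (Complex.exp (θ * I))) := by
    intro θ
    simp [deriv_circleMap, circleMap, smul_eq_mul]
    ring
  simp only [h1]
  rw [intervalIntegral.integral_const_mul]
  have h2 : ∫ θ in (0:ℝ)..(2*Real.pi), Complex.exp (θ * I) * g (Complex.exp (θ * I))
      = ((2*Real.pi : ℝ)) • ∫ t in (0:ℝ)..1,
          Complex.exp (2 * Real.pi * I * t) * g (Complex.exp (2 * Real.pi * I * t)) := by
    have := intervalIntegral.smul_integral_comp_mul_left
      (f := fun θ : ℝ => Complex.exp (θ * I) * g (Complex.exp (θ * I)))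
      (a := (0:ℝ)) (b := (1:ℝ)) (2*Real.pi)
    rw [mul_zero, mul_one] at this
    rw [show ((2*Real.pi:ℝ)) • (∫ t in (0:ℝ)..1,
          Complex.exp (2 * Real.pi * I * t) * g (Complex.exp (2 * Real.pi * I * t))) =
        ((2*Real.pi:ℝ)) • (∫ x in (0:ℝ)..1,
          Complex.exp ((2*Real.pi*x : ℝ) * I) * g (Complex.exp ((2*Real.pi*x:ℝ) * I))) from ?_, this]
    congr 1
    refine intervalIntegral.integral_congr fun t _ => ?_
    have h : ((2*Real.pi*t : ℝ) : ℂ) * I = 2 * Real.pi * I * t := by push_cast; ring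
    rw [h]
  rw [h2, Complex.real_smul]
  push_cast
  ring

lemma two_pi_I_ne : (2 * Real.pi * I : ℂ) ≠ 0 := by
  simp [Real.pi_ne_zero, I_ne_zero, Complex.ext_iff, Real.pi_pos.ne']

lemma mean_value (f : ℂ → ℂ) (hf : DifferentiableOn ℂ f (Metric.closedBall 0 1)) :
    ∫ t in (0:ℝ)..1, f (Complex.exp (2 * Real.pi * I * t)) = f 0 := by
  have h := hf.circleIntegral_sub_inv_smul (w := 0) (by simp)
  rw [circle_param (fun z => (z - 0)⁻¹ • f z)] at h
  have h2 : (∫ t in (0:ℝ)..1,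
      Complex.exp (2 * Real.pi * I * t) *
        ((Complex.exp (2 * Real.pi * I * t) - 0)⁻¹ • f (Complex.exp (2 * Real.pi * I * t))))
      = ∫ t in (0:ℝ)..1, f (Complex.exp (2 * Real.pi * I * t)) := by
    refine intervalIntegral.integral_congr fun t _ => ?_
    have he := Complex.exp_ne_zero (2 * Real.pi * I * t)
    rw [sub_zero, smul_eq_mul, ← mul_assoc, mul_inv_cancel₀ he, one_mul]
  rw [h2, smul_eq_mul] at h
  exact mul_left_cancel₀ two_pi_I_ne h

lemma pole_int {w : ℂ} (hw : w ∈ Metric.ball (0:ℂ) 1) :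
    ∫ t in (0:ℝ)..1,
      Complex.exp (2 * Real.pi * I * t) * (Complex.exp (2 * Real.pi * I * t) - w)⁻¹ = 1 := by
  have h := circleIntegral.integral_sub_inv_of_mem_ball hw
  rw [circle_param (fun z => (z - w)⁻¹)] at h
  have := mul_left_cancel₀ two_pi_I_ne (h.trans (mul_one _).symm)
  simpa using this

lemma exp_circle_eq (t : ℝ) :
    Complex.exp (2 * Real.pi * I * t) = Complex.exp (((2 * Real.pi * t : ℝ)) * I) := by
  push_cast; ring_nf

lemma abs_exp_circle (t : ℝ) : ‖Complex.exp (2 * Real.pi * I * t)‖ = 1 := by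
  rw [exp_circle_eq]; exact Complex.norm_exp_ofReal_mul_I _

lemma exp_circle_sub_half_ne (t : ℝ) : Complex.exp (2 * Real.pi * I * t) - 1/2 ≠ 0 := by
  intro h
  rw [sub_eq_zero] at h
  have := abs_exp_circle t
  rw [h] at this
  simp at this

lemma two_sub_exp_circle_ne (t : ℝ) : (2 : ℂ) - Complex.exp (2 * Real.pi * I * t) ≠ 0 := by
  intro h
  rw [sub_eq_zero] at h
  have := abs_exp_circle t
  rw [← h] at this
  simp at this

lemma cont_exp_circle : Continuous (fun t : ℝ => Complex.exp (2 * Real.pi * I * t)) := by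
  fun_prop

lemma cont_exp_a (a : ℂ) :
    Continuous (fun t : ℝ => Complex.exp (a * Complex.exp (2 * Real.pi * I * t))) := by
  fun_prop

lemma cont_inv_e : Continuous (fun t : ℝ => (Complex.exp (2 * Real.pi * I * t))⁻¹) :=
  cont_exp_circle.inv₀ fun _ => Complex.exp_ne_zero _

lemma cont_inv_half : Continuous (fun t : ℝ => (Complex.exp (2 * Real.pi * I * t) - 1/2)⁻¹) :=
  (cont_exp_circle.sub continuous_const).inv₀ exp_circle_sub_half_ne

lemma cont_inv_two : Continuous (fun t : ℝ => ((2:ℂ) - Complex.exp (2 * Real.pi * I * t))⁻¹) :=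
  (continuous_const.sub cont_exp_circle).inv₀ two_sub_exp_circle_ne

lemma hasDeriv_G (a : ℂ) (t : ℝ) :
    HasDerivAt (fun s : ℝ => Complex.exp (a * Complex.exp (2 * Real.pi * I * s)
        - 2 * Real.pi * I * s))
      ((a * Complex.exp (2 * Real.pi * I * t) * (2 * Real.pi * I) - 2 * Real.pi * I) *
        Complex.exp (a * Complex.exp (2 * Real.pi * I * t) - 2 * Real.pi * I * t)) t := by
  have hid : HasDerivAt (fun s : ℝ => (s : ℂ)) 1 t := by
    simpa using (hasDerivAt_id t).ofReal_comp
  have hct : HasDerivAt (fun s : ℝ => (2 * Real.pi * I) * (s : ℂ)) (2 * Real.pi * I) t := by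
    simpa using hid.const_mul (2 * Real.pi * I : ℂ)
  have hec : HasDerivAt (fun s : ℝ => Complex.exp (2 * Real.pi * I * s))
      (Complex.exp (2 * Real.pi * I * t) * (2 * Real.pi * I)) t := hct.cexp
  have hu : HasDerivAt (fun s : ℝ => a * Complex.exp (2 * Real.pi * I * s)
        - 2 * Real.pi * I * s)
      (a * (Complex.exp (2 * Real.pi * I * t) * (2 * Real.pi * I)) - 2 * Real.pi * I) t :=
    (hec.const_mul a).sub hct
  have := hu.cexp
  convert this using 1
  ring

/-! ### The five elementary integrals -/

lemma int_exp_a (a : ℂ) :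
    ∫ t in (0:ℝ)..1, Complex.exp (a * Complex.exp (2 * Real.pi * I * t)) = 1 := by
  have h := mean_value (fun z => Complex.exp (a * z))
    ((Complex.differentiable_exp.comp ((differentiable_id).const_mul a)).differentiableOn)
  simpa using h

lemma int_I5 (a : ℂ) :
    ∫ t in (0:ℝ)..1, Complex.exp (a * Complex.exp (2 * Real.pi * I * t)) *
      ((2:ℂ) - Complex.exp (2 * Real.pi * I * t))⁻¹ = 1/2 := by
  have hd : DifferentiableOn ℂ (fun z : ℂ => Complex.exp (a * z) * ((2:ℂ) - z)⁻¹)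
      (Metric.closedBall 0 1) := by
    apply DifferentiableOn.mul
    · exact (Complex.differentiable_exp.comp ((differentiable_id).const_mul a)).differentiableOn
    · apply DifferentiableOn.inv
      · exact (differentiableOn_const _).sub differentiableOn_id
      · intro z hz
        simp only [Metric.mem_closedBall, Complex.dist_eq, sub_zero] at hz
        intro h
        rw [sub_eq_zero] at h
        rw [← h] at hz
        simp at hz
  have h := mean_value _ hd
  simp at h
  rw [h]
  norm_num

lemma int_I2 : ∫ t in (0:ℝ)..1, (Complex.exp (2 * Real.pi * I * t))⁻¹ = 0 := by
  have h1 : ∀ t : ℝ, (Complex.exp (2 * Real.pi * I * t))⁻¹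
      = Complex.exp ((-(2 * Real.pi * I)) * t) := by
    intro t
    rw [← Complex.exp_neg]
    ring_nf
  rw [intervalIntegral.integral_congr (fun t _ => h1 t)]
  rw [integral_exp_mul_complex (by simpa using two_pi_I_ne)]
  simp [Complex.exp_neg, Complex.exp_two_pi_mul_I]

lemma half_mem_ball : (1/2 : ℂ) ∈ Metric.ball (0:ℂ) 1 := by
  simp [Metric.mem_ball, Complex.dist_eq]
  norm_num

lemma int_I3 : ∫ t in (0:ℝ)..1, (Complex.exp (2 * Real.pi * I * t) - 1/2)⁻¹ = 0 := by
  have hp := pole_int half_mem_ball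
  have h1 : ∀ t : ℝ, Complex.exp (2 * Real.pi * I * t) *
      (Complex.exp (2 * Real.pi * I * t) - 1/2)⁻¹
      = 1 + (1/2 : ℂ) * (Complex.exp (2 * Real.pi * I * t) - 1/2)⁻¹ := by
    intro t
    have hne := mul_inv_cancel₀ (exp_circle_sub_half_ne t)
    linear_combination hne
  rw [intervalIntegral.integral_congr (fun t _ => h1 t)] at hp
  rw [intervalIntegral.integral_add (intervalIntegrable_const)
    ((continuous_const.fun_mul cont_inv_half).intervalIntegrable _ _),
    intervalIntegral.integral_const_mul, intervalIntegral.integral_const] at hp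
  rw [show ((1:ℝ)-0) • (1:ℂ) = 1 by norm_num] at hp
  have h2 : (1/2:ℂ) * (∫ t in (0:ℝ)..1, (Complex.exp (2 * Real.pi * I * t) - 1/2)⁻¹) = 0 := by
    linear_combination hp
  exact (mul_eq_zero.mp h2).resolve_left (by norm_num)

lemma int_I4 (a : ℂ) :
    ∫ t in (0:ℝ)..1, Complex.exp (a * Complex.exp (2 * Real.pi * I * t)) *
      (Complex.exp (2 * Real.pi * I * t))⁻¹ = a := by
  have hint : IntervalIntegrable (fun t : ℝ =>
      (a * Complex.exp (2 * Real.pi * I * t) * (2 * Real.pi * I) - 2 * Real.pi * I) *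
        Complex.exp (a * Complex.exp (2 * Real.pi * I * t) - 2 * Real.pi * I * t))
      MeasureTheory.volume 0 1 := by
    apply Continuous.intervalIntegrable
    fun_prop
  have h := intervalIntegral.integral_eq_sub_of_hasDerivAt
    (f := fun s : ℝ => Complex.exp (a * Complex.exp (2 * Real.pi * I * s) - 2 * Real.pi * I * s))
    (fun t _ => hasDeriv_G a t) hint
  beta_reduce at h
  have hend : Complex.exp (a * Complex.exp (2 * Real.pi * I * (1:ℝ)) - 2 * Real.pi * I * (1:ℝ))
      = Complex.exp (a * Complex.exp (2 * Real.pi * I * (0:ℝ)) - 2 * Real.pi * I * (0:ℝ)) := by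
    push_cast
    rw [mul_one, Complex.exp_sub, Complex.exp_two_pi_mul_I]
    simp
  rw [hend, sub_self] at h
  have h2 : ∀ t : ℝ, (a * Complex.exp (2 * Real.pi * I * t) * (2 * Real.pi * I) - 2 * Real.pi * I) *
        Complex.exp (a * Complex.exp (2 * Real.pi * I * t) - 2 * Real.pi * I * t)
      = (2 * Real.pi * I) * (a * Complex.exp (a * Complex.exp (2 * Real.pi * I * t)))
        - (2 * Real.pi * I) * (Complex.exp (a * Complex.exp (2 * Real.pi * I * t)) *
            (Complex.exp (2 * Real.pi * I * t))⁻¹) := by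
    intro t
    rw [Complex.exp_sub]
    have := Complex.exp_ne_zero (2 * Real.pi * I * t)
    field_simp
  rw [intervalIntegral.integral_congr (fun t _ => h2 t)] at h
  rw [intervalIntegral.integral_sub
    ((continuous_const.fun_mul (continuous_const.fun_mul (cont_exp_a a))).intervalIntegrable _ _)
    ((continuous_const.fun_mul ((cont_exp_a a).fun_mul cont_inv_e)).intervalIntegrable _ _)] at h
  simp only [intervalIntegral.integral_const_mul, int_exp_a] at h
  have h3 : (2 * Real.pi * I : ℂ) * (∫ t in (0:ℝ)..1,
      Complex.exp (a * Complex.exp (2 * Real.pi * I * t)) *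
        (Complex.exp (2 * Real.pi * I * t))⁻¹) = (2 * Real.pi * I) * a := by
    linear_combination -h
  exact mul_left_cancel₀ two_pi_I_ne h3

/-! ### Partial fraction decomposition of `Ffun` on the unit circle -/

lemma Ffun_eq (lam τ : ℝ) (hlam : lam ≠ 0) (z : ℂ) (hz0 : z ≠ 0)
    (hzh : z - 1/2 ≠ 0) (hz2 : (2:ℂ) - z ≠ 0) :
    Ffun lam lam 0 τ z = Complex.exp (-(lam:ℂ) * τ) / (lam:ℂ)^2 *
      ((1:ℂ)/2 - z⁻¹ + (4:ℂ)⁻¹ * (z - 1/2)⁻¹ +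
        Complex.exp ((lam:ℂ) * τ * z) * z⁻¹ +
        Complex.exp ((lam:ℂ) * τ * z) * (2 - z)⁻¹) := by
  have hl : (lam:ℂ) ≠ 0 := Complex.ofReal_ne_zero.2 hlam
  have hsplit : Complex.exp ((lam : ℂ) * (z - 1) * τ)
      = Complex.exp ((lam:ℂ) * τ * z) * Complex.exp (-(lam:ℂ) * τ) := by
    rw [← Complex.exp_add]; congr 1; ring
  have hu : z * z⁻¹ = 1 := mul_inv_cancel₀ hz0
  have hv : (z - 1/2) * (z - 1/2)⁻¹ = 1 := mul_inv_cancel₀ hzh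
  have hw : ((2:ℂ) - z) * ((2:ℂ) - z)⁻¹ = 1 := mul_inv_cancel₀ hz2
  have hi : (lam:ℂ) * (lam:ℂ)⁻¹ = 1 := mul_inv_cancel₀ hl
  rw [Ffun, hsplit,
    show ((lam:ℂ) - ↑lam - ↑lam * z) = -(↑lam * z) by ring,
    show ((lam:ℂ) - (↑lam + ↑lam) * z) = -(2 * ((lam:ℂ) * (z - 1/2))) by ring,
    show ((lam:ℂ) * (↑lam + ↑lam - ↑lam * z)) = (lam:ℂ) * ((lam:ℂ) * (2 - z)) by ring]
  simp only [pow_zero, div_eq_mul_inv, inv_neg, mul_inv]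
  rw [show ((lam:ℂ)^2)⁻¹ = (lam:ℂ)⁻¹ * (lam:ℂ)⁻¹ by rw [sq, mul_inv]]
  linear_combination
    ((1/2) * z * (z - 1/2)⁻¹ * (lam:ℂ)⁻¹ * (lam:ℂ)⁻¹ * Complex.exp (-(lam:ℂ)*τ)
      + (lam:ℂ)⁻¹ * (lam:ℂ)⁻¹ * Complex.exp (-(lam:ℂ)*τ) * Complex.exp ((lam:ℂ)*τ*z) * ((2:ℂ)-z)⁻¹) * hu
    + ((1/2) * (lam:ℂ)⁻¹ * (lam:ℂ)⁻¹ * Complex.exp (-(lam:ℂ)*τ)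
      - (lam:ℂ)⁻¹ * (lam:ℂ)⁻¹ * Complex.exp (-(lam:ℂ)*τ) * z⁻¹) * hv
    + ((lam:ℂ)⁻¹ * (lam:ℂ)⁻¹ * Complex.exp (-(lam:ℂ)*τ) * Complex.exp ((lam:ℂ)*τ*z) * z⁻¹) * hw
    + (2 * z⁻¹ * ((2:ℂ)-z)⁻¹ * (lam:ℂ)⁻¹ * (lam:ℂ)⁻¹ * Complex.exp (-(lam:ℂ)*τ) * Complex.exp ((lam:ℂ)*τ*z)) * hi

/-! ### The key integral -/

lemma key_integral (lam τ : ℝ) (hlam : lam ≠ 0) :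
    ∫ t in (0:ℝ)..1, Ffun lam lam 0 τ (Complex.exp (2 * Real.pi * I * t))
      = Complex.exp (-(lam:ℂ) * τ) / (lam:ℂ)^2 * (1 + (lam:ℂ) * τ) := by
  rw [intervalIntegral.integral_congr (fun t _ => Ffun_eq lam τ hlam _
      (Complex.exp_ne_zero _) (exp_circle_sub_half_ne t) (two_sub_exp_circle_ne t))]
  rw [intervalIntegral.integral_const_mul]
  rw [intervalIntegral.integral_add
      ((((continuous_const.fun_sub cont_inv_e).fun_add (continuous_const.fun_mul cont_inv_half)).fun_add
        ((cont_exp_a _).fun_mul cont_inv_e)).intervalIntegrable _ _)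
      (((cont_exp_a _).fun_mul cont_inv_two).intervalIntegrable _ _)]
  rw [intervalIntegral.integral_add
      (((continuous_const.fun_sub cont_inv_e).fun_add (continuous_const.fun_mul cont_inv_half)).intervalIntegrable _ _)
      (((cont_exp_a _).fun_mul cont_inv_e).intervalIntegrable _ _)]
  rw [intervalIntegral.integral_add
      ((continuous_const.fun_sub cont_inv_e).intervalIntegrable _ _)
      ((continuous_const.fun_mul cont_inv_half).intervalIntegrable _ _)]
  rw [intervalIntegral.integral_sub
      ((continuous_const (y := (1:ℂ)/2)).intervalIntegrable _ _)
      (cont_inv_e.intervalIntegrable _ _)]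
  rw [intervalIntegral.integral_const_mul, int_I2, int_I3, int_I4, int_I5,
    intervalIntegral.integral_const]
  rw [show ((1:ℝ)-0) • ((1:ℂ)/2) = 1/2 by norm_num]
  ring

/-- with β = λ, (σ²/(2β)) ∫₀¹ F_{0,τ}(e^{2πit}) dt
= (σ² e^{−λτ}/(2λ³))(1 + λτ). -/
theorem stmt16 (lam σ : ℝ) (hlam : 0 < lam) (τ : ℝ) (hτ : 0 ≤ τ) :
    ((σ : ℂ) ^ 2 / (2 * lam)) *
        ∫ t in (0 : ℝ)..1, Ffun lam lam 0 τ (Complex.exp (2 * Real.pi * Complex.I * t)) =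
      ((σ ^ 2 * Real.exp (-lam * τ) / (2 * lam ^ 3) * (1 + lam * τ) : ℝ) : ℂ) := by
  rw [key_integral lam τ hlam.ne']
  have hl : (lam:ℂ) ≠ 0 := Complex.ofReal_ne_zero.2 hlam.ne'
  rw [show ((σ ^ 2 * Real.exp (-lam * τ) / (2 * lam ^ 3) * (1 + lam * τ) : ℝ) : ℂ)
      = (σ:ℂ)^2 * Complex.exp (-(lam:ℂ) * τ) / (2*(lam:ℂ)^3) * (1+(lam:ℂ)*τ) by
    push_cast [Complex.ofReal_exp]
    ring_nf]
  field_simp
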